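/- Assume the robust control Lyapunov hypothesis holds. Let S ⊆ CS and π : ℝ^n → ℝ^d and L : ℝ^n → ℝ satisfy: for all x ∈ S, π x ∈ U; for all x ∈ S and all w ∈ W, A x + B (π x) + w ∈ S and h(x, π x) + L(A x + B (π x) + w) ≤ L x; and Q x ≤ L x for all x ∈ S. Then for every horizon N and every x₀ ∈ S, the min–max LMPC value is bounded by the worst-case cost-to-go of the previous policy: V N x₀ ≤ (L x₀ : EReal). (Worst-case performance improvement: the worst-case iteration cost of the new LMPC policy does not exceed that of the policy generating L.) -/

import Mathlib

/-- Value-function form of Theorem 2 (worst-case performance improvement):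
if `L` is a worst-case cost-to-go certified by a policy `π` on a robustly
invariant subset `S ⊆ CS`, dominating the terminal cost `Q` on `S`, then the
min–max LMPC value satisfies `V N x₀ ≤ L x₀` for every `x₀ ∈ S`. -/
theorem lmpc_worst_case_performance_improvement
    {n d : ℕ}
    (A : (Fin n → ℝ) →ₗ[ℝ] (Fin n → ℝ)) (B : (Fin d → ℝ) →ₗ[ℝ] (Fin n → ℝ))
    (W X : Set (Fin n → ℝ)) (U : Set (Fin d → ℝ))
    (hW : W.Nonempty)
    (h : (Fin n → ℝ) × (Fin d → ℝ) → ℝ)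
    (hpos : ∀ x u, 0 ≤ h (x, u))
    (CS : Set (Fin n → ℝ)) (hCSX : CS ⊆ X)
    (Q : (Fin n → ℝ) → ℝ) (hQ0 : ∀ x ∈ CS, 0 ≤ Q x)
    (Qbar : (Fin n → ℝ) → EReal)
    (hQbarIn : ∀ x ∈ CS, Qbar x = (Q x : EReal))
    (hQbarOut : ∀ x ∉ CS, Qbar x = ⊤)
    (T : ((Fin n → ℝ) → EReal) → (Fin n → ℝ) → EReal)
    (hTin : ∀ f, ∀ x ∈ X, T f x =
      ⨅ u ∈ U, ⨆ w ∈ W, ((h (x, u) : EReal) + f (A x + B u + w)))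
    (hTout : ∀ f, ∀ x ∉ X, T f x = ⊤)
    (V : ℕ → (Fin n → ℝ) → EReal)
    (hV0 : V 0 = Qbar) (hVs : ∀ k, V (k + 1) = T (V k))
    (hRCL : ∀ x ∈ CS, ∃ u ∈ U, ∀ w ∈ W,
      A x + B u + w ∈ CS ∧ h (x, u) + Q (A x + B u + w) ≤ Q x)
    (S : Set (Fin n → ℝ)) (hS : S ⊆ CS)
    (π : (Fin n → ℝ) → (Fin d → ℝ)) (L : (Fin n → ℝ) → ℝ)
    (hπU : ∀ x ∈ S, π x ∈ U)
    (hInv : ∀ x ∈ S, ∀ w ∈ W, A x + B (π x) + w ∈ S ∧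
      h (x, π x) + L (A x + B (π x) + w) ≤ L x)
    (hQL : ∀ x ∈ S, Q x ≤ L x) :
    ∀ (N : ℕ), ∀ x₀ ∈ S, V N x₀ ≤ (L x₀ : EReal) := by
  intro N
  induction N with
  | zero =>
    intro x₀ hx₀
    rw [hV0, hQbarIn x₀ (hS hx₀)]
    exact_mod_cast hQL x₀ hx₀
  | succ k ih =>
    intro x₀ hx₀
    rw [hVs k, hTin (V k) x₀ (hCSX (hS hx₀))]
    refine le_trans (iInf₂_le (π x₀) (hπU x₀ hx₀)) ?_
    refine iSup₂_le fun w hw => ?_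
    obtain ⟨hmem, hle⟩ := hInv x₀ hx₀ w hw
    calc (h (x₀, π x₀) : EReal) + V k (A x₀ + B (π x₀) + w)
        ≤ (h (x₀, π x₀) : EReal) + (L (A x₀ + B (π x₀) + w) : EReal) :=
          add_le_add le_rfl (ih _ hmem)
      _ = ((h (x₀, π x₀) + L (A x₀ + B (π x₀) + w) : ℝ) : EReal) := by
          rw [EReal.coe_add]
      _ ≤ (L x₀ : EReal) := by exact_mod_cast hle
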